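/- Let a < b be positive integers. Let w, A : ℝ → ℂ be real-analytic and 2π-periodic, with w not identically zero. Assume: (i) every zero of w is of order exactly 2; (ii) Re(w(t))·Im(w'(t)) − Im(w(t))·Re(w'(t)) ≠ 0 for every t with w(t) ≠ 0; (iii) at every zero t₀ of w: Im(w'''(t₀)/(3·w''(t₀))) ≠ 0, the number A(t₀)·conj(w''(t₀)) is real and nonzero, Re(conj(A(t₀))·A'(t₀)) = 0, and Im(A'(t₀)/A(t₀)) − Im(w'''(t₀)/(3·w''(t₀))) = ((a+b)/(2b−a))·Im(w'''(t₀)/(3·w''(t₀))). Then there exists r₀ > 0 such that for every r with 0 < r < r₀ and every t ∈ ℝ: Re(a·r^{a−1}·w(t) + b·r^{b−1}·A(t))·Im(r^a·w'(t) + r^b·A'(t)) − Im(a·r^{a−1}·w(t) + b·r^{b−1}·A(t))·Re(r^a·w'(t) + r^b·A'(t)) ≠ 0. -/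

import Mathlib

open Filter Complex

section Aux

lemma analyticAt_deriv' {E : Type*} [NormedAddCommGroup E] [NormedSpace ℝ E] [CompleteSpace E]
    {f : ℝ → E} {x : ℝ} (h : AnalyticAt ℝ f x) : AnalyticAt ℝ (deriv f) x :=
  (AnalyticOnNhd.deriv (fun _ hy => hy : AnalyticOnNhd ℝ f {y | AnalyticAt ℝ f y})) x h

/-- The rescaled Jacobian function. -/
noncomputable def Hfun (a b : ℕ) (w A : ℝ → ℂ) (s t : ℝ) : ℝ :=
  ((a : ℝ) * (w t).re + s * b * (A t).re) * ((deriv w t).im + s * (deriv A t).im)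
    - ((a : ℝ) * (w t).im + s * b * (A t).im) * ((deriv w t).re + s * (deriv A t).re)

lemma jacobian_eq (a b : ℕ) (ha : 0 < a) (hab : a < b) (w A : ℝ → ℂ) (r t : ℝ) :
    ((a : ℂ) * (r : ℂ) ^ (a - 1) * w t + (b : ℂ) * (r : ℂ) ^ (b - 1) * A t).re *
          ((r : ℂ) ^ a * deriv w t + (r : ℂ) ^ b * deriv A t).im -
        ((a : ℂ) * (r : ℂ) ^ (a - 1) * w t + (b : ℂ) * (r : ℂ) ^ (b - 1) * A t).im *
          ((r : ℂ) ^ a * deriv w t + (r : ℂ) ^ b * deriv A t).re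
      = (r ^ (a - 1) * r ^ (a - 1) * r) * Hfun a b w A (r ^ (b - a)) t := by
  have e1 : r ^ a = r ^ (a - 1) * r := by
    rw [← pow_succ]; congr 1; omega
  have e2 : r ^ (b - 1) = r ^ (a - 1) * r ^ (b - a) := by
    rw [← pow_add]; congr 1; omega
  have e3 : r ^ b = r ^ (a - 1) * r * r ^ (b - a) := by
    rw [← pow_succ r (a-1), ← pow_add]; congr 1; omega
  have c1 : ((r : ℂ)) ^ (a-1) = ((r ^ (a-1) : ℝ) : ℂ) := by push_cast; ring
  have c2 : ((r : ℂ)) ^ (b-1) = ((r ^ (b-1) : ℝ) : ℂ) := by push_cast; ring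
  have c3 : ((r : ℂ)) ^ a = ((r ^ a : ℝ) : ℂ) := by push_cast; ring
  have c4 : ((r : ℂ)) ^ b = ((r ^ b : ℝ) : ℂ) := by push_cast; ring
  have cn : ∀ n : ℕ, ((n : ℂ)) = ((n : ℝ) : ℂ) := fun n => by push_cast; ring
  rw [c1, c2, c3, c4, cn a, cn b]
  simp only [Hfun, Complex.add_re, Complex.add_im, Complex.mul_re, Complex.mul_im,
    Complex.ofReal_re, Complex.ofReal_im]
  rw [e1, e2, e3]
  ring

lemma quad_pos (c₁ c₂ e u s : ℝ) (hc₁ : 0 < c₁) (hc₂ : 0 < c₂) (hs : 0 < s)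
    (he : |e| < min c₁ c₂) :
    0 < c₁ * u^4 + s * u^2 * e + c₂ * s^2 := by
  rcases abs_lt.mp he with ⟨hl, hr⟩
  have hm1 : min c₁ c₂ ≤ c₁ := min_le_left _ _
  have hm2 : min c₁ c₂ ≤ c₂ := min_le_right _ _
  nlinarith [sq_nonneg (s - u^2), sq_nonneg u, sq_nonneg (u^2), mul_pos hs hs,
    mul_nonneg (sq_nonneg u) (le_of_lt hs)]

lemma core_alg (aR bR x y x' y' X Y X' Y' : ℝ)
    (ha : 0 < aR) (hab : aR < bR)
    (h2 : x * Y = y * X)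
    (hk : x * X + y * Y ≠ 0)
    (hnA : 0 < x^2 + y^2) (hnW : 0 < X^2 + Y^2)
    (e5 : (2*bR - aR) * ((x*y' - y*x') * (X^2+Y^2)) = 3*bR * ((X*Y' - Y*X') * (x^2+y^2))) :
    2*bR*(x'*Y + x*Y' - y'*X - y*X') + aR*(X*y' - Y*x') + bR*(x*Y' - y*X') = 0 := by
  have e1 : (x*X + y*Y) * (X*Y' - Y*X') = (X^2+Y^2) * (x*Y' - y*X') := by
    linear_combination -(X*X' + Y*Y') * h2
  have e2 : (x*X + y*Y) * (x*y' - y*x') = -((x^2+y^2) * (x'*Y - y'*X)) := by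
    linear_combination (x*x' + y*y') * h2
  have key : (x*X + y*Y) * ((x^2+y^2) * ((X^2+Y^2) *
      (2*bR*(x'*Y + x*Y' - y'*X - y*X') + aR*(X*y' - Y*x') + bR*(x*Y' - y*X')))) = 0 := by
    linear_combination ((2*bR-aR)*(X^2+Y^2)*(x*X+y*Y))*e2 - (3*bR*(x^2+y^2)*(x*X+y*Y))*e1
      - (x*X+y*Y)^2*e5
  rcases mul_eq_zero.mp key with h | h
  · exact absurd h hk
  rcases mul_eq_zero.mp h with h | h
  · exact absurd h (ne_of_gt hnA)
  rcases mul_eq_zero.mp h with h | h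
  · exact absurd h (ne_of_gt hnW)
  exact h

lemma core_sign (aR bR x y x' y' X Y X' Y' : ℝ)
    (ha : 0 < aR) (hab : aR < bR)
    (hIWW : X*Y' - Y*X' ≠ 0)
    (hnA : 0 < x^2 + y^2) (hnW : 0 < X^2 + Y^2)
    (e5 : (2*bR - aR) * ((x*y' - y*x') * (X^2+Y^2)) = 3*bR * ((X*Y' - Y*X') * (x^2+y^2))) :
    0 < (X*Y' - Y*X') * (x*y' - y*x') := by
  have hsq : 0 < (X*Y' - Y*X')^2 :=
    lt_of_le_of_ne (sq_nonneg _) (Ne.symm (pow_ne_zero 2 hIWW))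
  have h1 : 0 < (2*bR - aR) * ((X*Y' - Y*X') * (x*y' - y*x')) * (X^2+Y^2) := by
    have heq : (2*bR - aR) * ((X*Y' - Y*X') * (x*y' - y*x')) * (X^2+Y^2)
        = 3*bR * ((X*Y' - Y*X')^2 * (x^2+y^2)) := by linear_combination (X*Y' - Y*X') * e5
    rw [heq]
    have hb3 : (0:ℝ) < 3*bR := by linarith
    exact mul_pos hb3 (mul_pos hsq hnA)
  by_contra hP
  push_neg at hP
  have h2' : (2*bR - aR) * ((X*Y' - Y*X') * (x*y' - y*x')) ≤ 0 :=
    mul_nonpos_of_nonneg_of_nonpos (by linarith) hP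
  have h3' : (2*bR - aR) * ((X*Y' - Y*X') * (x*y' - y*x')) * (X^2+Y^2) ≤ 0 :=
    mul_nonpos_of_nonpos_of_nonneg h2' (le_of_lt hnW)
  linarith

lemma factor_w (w : ℝ → ℂ) (hw : ∀ t, AnalyticAt ℝ w t) (t₁ : ℝ)
    (h0 : w t₁ = 0) (h1 : deriv w t₁ = 0) :
    ∃ W : ℝ → ℂ, AnalyticAt ℝ W t₁ ∧ (∀ t, w t = (((t - t₁ : ℝ)) : ℂ) ^ 2 * W t) ∧
      iteratedDeriv 2 w t₁ = 2 * W t₁ ∧ iteratedDeriv 3 w t₁ = 6 * deriv W t₁ ∧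
      (∀ᶠ t in nhds t₁, deriv w t
        = 2 * ((t : ℂ) - (t₁ : ℂ)) * W t + ((t : ℂ) - (t₁ : ℂ)) ^ 2 * deriv W t) := by
  classical
  set w₁ : ℝ → ℂ := dslope w t₁ with hw₁
  set W : ℝ → ℂ := dslope w₁ t₁ with hWdef
  obtain ⟨p, hp⟩ := hw t₁
  have hW_an : AnalyticAt ℝ W t₁ :=
    ⟨p.fslope.fslope, hp.has_fpower_series_dslope_fslope.has_fpower_series_dslope_fslope⟩
  have hw₁t₁ : w₁ t₁ = 0 := by rw [hw₁, dslope_same, h1]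
  have hfact : ∀ t, w t = (((t - t₁ : ℝ)) : ℂ) ^ 2 * W t := by
    intro t
    have e1 : (t - t₁) • w₁ t = w t - w t₁ := sub_smul_dslope w t₁ t
    have e2 : (t - t₁) • W t = w₁ t - w₁ t₁ := sub_smul_dslope w₁ t₁ t
    rw [h0, sub_zero] at e1
    rw [hw₁t₁, sub_zero] at e2
    rw [← e1, ← e2, Complex.real_smul, Complex.real_smul]
    ring
  have hc : ∀ t : ℝ, HasDerivAt (fun t : ℝ => ((t : ℂ) - (t₁ : ℂ))) 1 t := by
    intro t
    simpa using (Complex.ofRealCLM.hasDerivAt (x := t)).sub_const (t₁ : ℂ)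
  have hcsq : ∀ t : ℝ, HasDerivAt (fun t : ℝ => ((t : ℂ) - (t₁ : ℂ)) ^ 2)
      (2 * ((t : ℂ) - (t₁ : ℂ))) t := by
    intro t
    have h := (hc t).fun_mul (hc t)
    have e : (fun t : ℝ => ((t : ℂ) - (t₁ : ℂ)) ^ 2)
        = fun t : ℝ => ((t : ℂ) - (t₁ : ℂ)) * ((t : ℂ) - (t₁ : ℂ)) := by
      funext t; ring
    rw [e]
    exact h.congr_deriv (by ring)
  have hwfun : w = fun t : ℝ => ((t : ℂ) - (t₁ : ℂ)) ^ 2 * W t := by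
    funext t; rw [hfact t]; push_cast; ring
  have hW_ev : ∀ᶠ t in nhds t₁, AnalyticAt ℝ W t := hW_an.eventually_analyticAt
  have hd1 : ∀ᶠ t in nhds t₁, deriv w t
      = 2 * ((t : ℂ) - (t₁ : ℂ)) * W t + ((t : ℂ) - (t₁ : ℂ)) ^ 2 * deriv W t := by
    filter_upwards [hW_ev] with t ht
    rw [hwfun]
    exact ((hcsq t).mul ht.differentiableAt.hasDerivAt).deriv.trans (by ring)
  have hd2 : ∀ᶠ t in nhds t₁, deriv (deriv w) t
      = 2 * W t + 4 * ((t : ℂ) - (t₁ : ℂ)) * deriv W t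
        + ((t : ℂ) - (t₁ : ℂ)) ^ 2 * deriv (deriv W) t := by
    have hEq : deriv w =ᶠ[nhds t₁]
        fun t => 2 * ((t : ℂ) - (t₁ : ℂ)) * W t + ((t : ℂ) - (t₁ : ℂ)) ^ 2 * deriv W t := hd1
    filter_upwards [hEq.deriv, hW_ev] with t ht hWt
    rw [ht]
    have hW't : AnalyticAt ℝ (deriv W) t := analyticAt_deriv' hWt
    have h1 : HasDerivAt (fun t : ℝ => 2 * ((t : ℂ) - (t₁ : ℂ)) * W t)
        (2 * W t + 2 * ((t : ℂ) - (t₁ : ℂ)) * deriv W t) t := by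
      have := (((hc t).const_mul (2 : ℂ)).fun_mul hWt.differentiableAt.hasDerivAt)
      exact this.congr_deriv (by ring)
    have h2 : HasDerivAt (fun t : ℝ => ((t : ℂ) - (t₁ : ℂ)) ^ 2 * deriv W t)
        (2 * ((t : ℂ) - (t₁ : ℂ)) * deriv W t
          + ((t : ℂ) - (t₁ : ℂ)) ^ 2 * deriv (deriv W) t) t :=
      (hcsq t).mul hW't.differentiableAt.hasDerivAt
    rw [(h1.fun_add h2).deriv]
    ring
  have hc0 : ((t₁ : ℂ) - (t₁ : ℂ)) = 0 := by ring
  refine ⟨W, hW_an, hfact, ?_, ?_, hd1⟩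
  · rw [show (2 : ℕ) = 1 + 1 from rfl, iteratedDeriv_succ, iteratedDeriv_one]
    rw [hd2.self_of_nhds, hc0]
    ring
  · have hW'_an : AnalyticAt ℝ (deriv W) t₁ := analyticAt_deriv' hW_an
    have hW''_an : AnalyticAt ℝ (deriv (deriv W)) t₁ := analyticAt_deriv' hW'_an
    have hg : HasDerivAt (fun t : ℝ => 2 * W t + 4 * ((t : ℂ) - (t₁ : ℂ)) * deriv W t
        + ((t : ℂ) - (t₁ : ℂ)) ^ 2 * deriv (deriv W) t) (6 * deriv W t₁) t₁ := by
      have h1 : HasDerivAt (fun t : ℝ => 2 * W t) (2 * deriv W t₁) t₁ :=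
        hW_an.differentiableAt.hasDerivAt.const_mul 2
      have h2 : HasDerivAt (fun t : ℝ => 4 * ((t : ℂ) - (t₁ : ℂ)) * deriv W t)
          (4 * deriv W t₁) t₁ := by
        have := (((hc t₁).const_mul (4 : ℂ)).fun_mul hW'_an.differentiableAt.hasDerivAt)
        exact this.congr_deriv (by rw [hc0]; ring)
      have h3 : HasDerivAt (fun t : ℝ => ((t : ℂ) - (t₁ : ℂ)) ^ 2 * deriv (deriv W) t)
          0 t₁ := by
        have := (hcsq t₁).fun_mul hW''_an.differentiableAt.hasDerivAt
        exact this.congr_deriv (by rw [hc0]; ring)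
      have := (h1.fun_add h2).fun_add h3
      exact this.congr_deriv (by ring)
    rw [show (3 : ℕ) = (1 + 1) + 1 from rfl, iteratedDeriv_succ, iteratedDeriv_succ,
      iteratedDeriv_one]
    have : deriv (deriv w) =ᶠ[nhds t₁] fun t => 2 * W t + 4 * ((t : ℂ) - (t₁ : ℂ)) * deriv W t
        + ((t : ℂ) - (t₁ : ℂ)) ^ 2 * deriv (deriv W) t := hd2
    rw [this.deriv_eq, hg.deriv]

end Aux

lemma local_nonzero (a b : ℕ) (ha : 0 < a) (w A : ℝ → ℂ)
    (hw_an : ∀ t, AnalyticAt ℝ w t) (hA_an : ∀ t, AnalyticAt ℝ A t) (t₁ : ℝ)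
    (hwt : w t₁ ≠ 0)
    (hP : (w t₁).re * (deriv w t₁).im - (w t₁).im * (deriv w t₁).re ≠ 0) :
    ∃ ε > (0:ℝ), ∃ s₁ > (0:ℝ), ∀ t, |t - t₁| < ε → ∀ s, 0 < s → s < s₁ →
      Hfun a b w A s t ≠ 0 := by
  have cw : ContinuousAt (fun p : ℝ × ℝ => w p.2) (0, t₁) :=
    (hw_an t₁).continuousAt.comp continuousAt_snd
  have cw' : ContinuousAt (fun p : ℝ × ℝ => deriv w p.2) (0, t₁) :=
    ContinuousAt.comp (g := deriv w) (f := Prod.snd) (x := ((0:ℝ), t₁))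
      (analyticAt_deriv' (hw_an t₁)).continuousAt continuousAt_snd
  have cA : ContinuousAt (fun p : ℝ × ℝ => A p.2) (0, t₁) :=
    (hA_an t₁).continuousAt.comp continuousAt_snd
  have cA' : ContinuousAt (fun p : ℝ × ℝ => deriv A p.2) (0, t₁) :=
    ContinuousAt.comp (g := deriv A) (f := Prod.snd) (x := ((0:ℝ), t₁))
      (analyticAt_deriv' (hA_an t₁)).continuousAt continuousAt_snd
  have cre : ∀ {f : ℝ × ℝ → ℂ}, ContinuousAt f (0, t₁) →
      ContinuousAt (fun p => (f p).re) (0, t₁) :=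
    fun h => Complex.continuous_re.continuousAt.comp h
  have cim : ∀ {f : ℝ × ℝ → ℂ}, ContinuousAt f (0, t₁) →
      ContinuousAt (fun p => (f p).im) (0, t₁) :=
    fun h => Complex.continuous_im.continuousAt.comp h
  have Hc : ContinuousAt (fun p : ℝ × ℝ => Hfun a b w A p.1 p.2) (0, t₁) := by
    simp only [Hfun]
    exact (((continuousAt_const.mul (cre cw)).add
        ((continuousAt_fst.mul continuousAt_const).mul (cre cA))).mul
        ((cim cw').add (continuousAt_fst.mul (cim cA')))).sub
      (((continuousAt_const.mul (cim cw)).add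
        ((continuousAt_fst.mul continuousAt_const).mul (cim cA))).mul
        ((cre cw').add (continuousAt_fst.mul (cre cA'))))
  have hval : Hfun a b w A 0 t₁ ≠ 0 := by
    have he : Hfun a b w A 0 t₁
        = a * ((w t₁).re * (deriv w t₁).im - (w t₁).im * (deriv w t₁).re) := by
      simp [Hfun]; ring
    rw [he]
    exact mul_ne_zero (Nat.cast_ne_zero.mpr ha.ne') hP
  have hev : ∀ᶠ p : ℝ × ℝ in nhds (0, t₁), Hfun a b w A p.1 p.2 ≠ 0 :=
    Hc.eventually_ne hval
  rw [Metric.eventually_nhds_iff] at hev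
  obtain ⟨δ, hδ, hball⟩ := hev
  refine ⟨δ, hδ, δ, hδ, fun t ht s hs hs' => ?_⟩
  have : dist ((s, t) : ℝ × ℝ) (0, t₁) < δ := by
    rw [Prod.dist_eq]
    apply max_lt
    · rw [Real.dist_eq, sub_zero, abs_of_pos hs]; exact hs'
    · rw [Real.dist_eq]; exact ht
  exact hball this

open Filter Complex

set_option maxHeartbeats 2000000 in
lemma local_zero (a b : ℕ) (ha : 0 < a) (hab : a < b) (w A : ℝ → ℂ)
    (hw_an : ∀ t, AnalyticAt ℝ w t) (hA_an : ∀ t, AnalyticAt ℝ A t) (t₁ : ℝ)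
    (hwt : w t₁ = 0)
    (horder : deriv w t₁ = 0 ∧ iteratedDeriv 2 w t₁ ≠ 0)
    (hz1 : (iteratedDeriv 3 w t₁ / (3 * iteratedDeriv 2 w t₁)).im ≠ 0)
    (hz2 : (A t₁ * (starRingEnd ℂ) (iteratedDeriv 2 w t₁)).im = 0)
    (hz3 : A t₁ * (starRingEnd ℂ) (iteratedDeriv 2 w t₁) ≠ 0)
    (hz5 : (deriv A t₁ / A t₁).im - (iteratedDeriv 3 w t₁ / (3 * iteratedDeriv 2 w t₁)).im
        = (((a : ℝ) + (b : ℝ)) / (2 * (b : ℝ) - (a : ℝ))) *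
            (iteratedDeriv 3 w t₁ / (3 * iteratedDeriv 2 w t₁)).im) :
    ∃ ε > (0:ℝ), ∃ s₁ > (0:ℝ), ∀ t, |t - t₁| < ε → ∀ s, 0 < s → s < s₁ →
      Hfun a b w A s t ≠ 0 := by
  obtain ⟨hd1, hd2ne⟩ := horder
  obtain ⟨W, hW_an, hfact, hit2, hit3, hdw_ev⟩ := factor_w w hw_an t₁ hwt hd1
  -- coordinates
  set x := (A t₁).re with hx
  set y := (A t₁).im with hy
  set x' := (deriv A t₁).re with hx'
  set y' := (deriv A t₁).im with hy'
  set X := (W t₁).re with hX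
  set Y := (W t₁).im with hY
  set X' := (deriv W t₁).re with hX'
  set Y' := (deriv W t₁).im with hY'
  have hWne : W t₁ ≠ 0 := by
    intro h; apply hd2ne; rw [hit2, h, mul_zero]
  have hdiv : iteratedDeriv 3 w t₁ / (3 * iteratedDeriv 2 w t₁) = deriv W t₁ / W t₁ := by
    rw [hit2, hit3, show (3:ℂ) * (2 * W t₁) = 6 * W t₁ by ring]
    exact mul_div_mul_left _ _ (by norm_num)
  have hnW : 0 < X^2 + Y^2 := by
    have := Complex.normSq_pos.mpr hWne
    rw [Complex.normSq_apply] at this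
    nlinarith
  have hprodne : A t₁ * (starRingEnd ℂ) (W t₁) ≠ 0 := by
    intro h; apply hz3
    rw [hit2, map_mul, show ((starRingEnd ℂ) 2 : ℂ) = 2 by apply Complex.ext <;> simp, ← mul_assoc,
      mul_comm (A t₁) 2, mul_assoc, h, mul_zero]
  have hAne : A t₁ ≠ 0 := fun h => hprodne (by rw [h, zero_mul])
  have hnA : 0 < x^2 + y^2 := by
    have := Complex.normSq_pos.mpr hAne
    rw [Complex.normSq_apply] at this
    nlinarith
  have hz2' : (A t₁ * (starRingEnd ℂ) (W t₁)).im = 0 := by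
    have h := hz2
    rw [hit2, map_mul, show ((starRingEnd ℂ) 2 : ℂ) = 2 by apply Complex.ext <;> simp, ← mul_assoc,
      mul_comm (A t₁) 2, mul_assoc] at h
    simpa using h
  -- coordinate form of hz2' : y * X - x * Y = 0  (to check sign)
  have hxY : x * Y = y * X := by
    simp only [Complex.mul_im, Complex.conj_re, Complex.conj_im] at hz2'
    simp only [← hx, ← hy, ← hX, ← hY] at hz2'
    linarith
  have hκ : x * X + y * Y ≠ 0 := by
    intro h
    apply hprodne
    apply Complex.ext
    · rw [Complex.zero_re]
      simp only [Complex.mul_re, Complex.conj_re, Complex.conj_im]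
      simp only [← hx, ← hy, ← hX, ← hY]
      linarith
    · simpa using hz2'
  have hIWW : X * Y' - Y * X' ≠ 0 := by
    intro h
    apply hz1
    rw [hdiv, Complex.div_im, Complex.normSq_apply, div_sub_div_same, div_eq_zero_iff]
    left
    simp only [← hX, ← hY, ← hX', ← hY']
    linarith
  have he5 : (2*(b:ℝ) - (a:ℝ)) * ((x*y' - y*x') * (X^2+Y^2))
      = 3*(b:ℝ) * ((X*Y' - Y*X') * (x^2+y^2)) := by
    rw [hdiv] at hz5
    rw [Complex.div_im, Complex.div_im, Complex.normSq_apply, Complex.normSq_apply] at hz5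
    have hba : (2*(b:ℝ) - (a:ℝ)) ≠ 0 := by
      have : (a:ℝ) < b := by exact_mod_cast hab
      linarith
    simp only [← hx, ← hy, ← hx', ← hy', ← hX, ← hY, ← hX', ← hY'] at hz5
    have hnA' : x*x + y*y ≠ 0 := by nlinarith
    have hnW' : X*X + Y*Y ≠ 0 := by nlinarith
    have hia : (x*x+y*y) * (x*x+y*y)⁻¹ = 1 := mul_inv_cancel₀ hnA'
    have hiw : (X*X+Y*Y) * (X*X+Y*Y)⁻¹ = 1 := mul_inv_cancel₀ hnW'
    have hj : (2*(b:ℝ) - (a:ℝ)) * (2*(b:ℝ) - (a:ℝ))⁻¹ = 1 := mul_inv_cancel₀ hba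
    have h6 : (X*X + Y*Y) * ((2*(b:ℝ) - (a:ℝ)) * ((x*y' - y*x') * (X^2+Y^2))
        - 3*(b:ℝ) * ((X*Y' - Y*X') * (x^2+y^2))) = 0 := by
      linear_combination ((X*X+Y*Y)*(x*x+y*y)*(X*X+Y*Y)*(2*(b:ℝ)-(a:ℝ))) * hz5
        - ((X*X+Y*Y)*(x*y'-y*x')*(X*X+Y*Y)*(2*(b:ℝ)-(a:ℝ))) * hia
        + ((X*X+Y*Y)*(X*Y'-Y*X')*(x*x+y*y)*(2*(b:ℝ)-(a:ℝ))
            *(1 + ((a:ℝ)+(b:ℝ))/(2*(b:ℝ)-(a:ℝ)))) * hiw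
        + ((X*X+Y*Y)*(X*Y'-Y*X')*(x*x+y*y)*((a:ℝ)+(b:ℝ))) * hj
    rcases mul_eq_zero.mp h6 with h | h
    · exact absurd h hnW'
    · linarith
  -- derivative analyticity
  have hA'_an : AnalyticAt ℝ (deriv A) t₁ := analyticAt_deriv' (hA_an t₁)
  have hW'_an : AnalyticAt ℝ (deriv W) t₁ := analyticAt_deriv' hW_an
  have ha' : (0:ℝ) < (a:ℝ) := by exact_mod_cast ha
  have hab' : ((a:ℝ)) < (b:ℝ) := by exact_mod_cast hab
  -- the auxiliary function m and its dslope g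
  set m : ℝ → ℝ := fun t => (A t).re * (W t).im - (A t).im * (W t).re with hm
  have hm_an : AnalyticAt ℝ m t₁ := by
    rw [hm]
    exact (((Complex.reCLM.analyticAt (A t₁)).comp (hA_an t₁)).mul
        ((Complex.imCLM.analyticAt (W t₁)).comp hW_an)).sub
      (((Complex.imCLM.analyticAt (A t₁)).comp (hA_an t₁)).mul
        ((Complex.reCLM.analyticAt (W t₁)).comp hW_an))
  set g : ℝ → ℝ := dslope m t₁ with hg
  have hg_an : AnalyticAt ℝ g t₁ := by
    obtain ⟨pm, hpm⟩ := hm_an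
    exact ⟨pm.fslope, hpm.has_fpower_series_dslope_fslope⟩
  have hm0 : m t₁ = 0 := by
    simp only [hm]
    simp only [← hx, ← hy, ← hX, ← hY]
    linarith
  have hmg : ∀ t, m t = (t - t₁) * g t := by
    intro t
    have h := sub_smul_dslope m t₁ t
    rw [hm0, sub_zero] at h
    rw [← h, smul_eq_mul]
  have hAd : HasDerivAt A (deriv A t₁) t₁ := (hA_an t₁).differentiableAt.hasDerivAt
  have hWd : HasDerivAt W (deriv W t₁) t₁ := hW_an.differentiableAt.hasDerivAt
  have hAre : HasDerivAt (fun t => (A t).re) x' t₁ :=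
    Complex.reCLM.hasFDerivAt.comp_hasDerivAt t₁ hAd
  have hAim : HasDerivAt (fun t => (A t).im) y' t₁ :=
    Complex.imCLM.hasFDerivAt.comp_hasDerivAt t₁ hAd
  have hWre : HasDerivAt (fun t => (W t).re) X' t₁ :=
    Complex.reCLM.hasFDerivAt.comp_hasDerivAt t₁ hWd
  have hWim : HasDerivAt (fun t => (W t).im) Y' t₁ :=
    Complex.imCLM.hasFDerivAt.comp_hasDerivAt t₁ hWd
  have hmd : HasDerivAt m (x' * (W t₁).im + (A t₁).re * Y' - (y' * (W t₁).re + (A t₁).im * X'))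
      t₁ := by
    rw [hm]
    exact (hAre.mul hWim).sub (hAim.mul hWre)
  have hgval : g t₁ = x'*Y + x*Y' - y'*X - y*X' := by
    rw [hg, dslope_same, hmd.deriv]
    simp only [← hx, ← hy, ← hX, ← hY]
    ring
  -- the coefficient functions
  set pf : ℝ → ℝ := fun t => (W t).re * (deriv W t).im - (W t).im * (deriv W t).re with hpf
  set q : ℝ → ℝ := fun t => 2*(b:ℝ)*(g t)
      + (a:ℝ)*((W t).re*(deriv A t).im - (W t).im*(deriv A t).re)
      + (b:ℝ)*((A t).re*(deriv W t).im - (A t).im*(deriv W t).re) with hqdef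
  set R : ℝ → ℝ := fun t => (A t).re*(deriv A t).im - (A t).im*(deriv A t).re with hRdef
  have cre : ∀ {f : ℝ → ℂ}, ContinuousAt f t₁ → ContinuousAt (fun t => (f t).re) t₁ :=
    fun h => Complex.continuous_re.continuousAt.comp h
  have cim : ∀ {f : ℝ → ℂ}, ContinuousAt f t₁ → ContinuousAt (fun t => (f t).im) t₁ :=
    fun h => Complex.continuous_im.continuousAt.comp h
  have cA : ContinuousAt A t₁ := (hA_an t₁).continuousAt
  have cA' : ContinuousAt (deriv A) t₁ := hA'_an.continuousAt
  have cW : ContinuousAt W t₁ := hW_an.continuousAt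
  have cW' : ContinuousAt (deriv W) t₁ := hW'_an.continuousAt
  have cpf : ContinuousAt pf t₁ := by
    rw [hpf]; exact ((cre cW).mul (cim cW')).sub ((cim cW).mul (cre cW'))
  have cq : ContinuousAt q t₁ := by
    rw [hqdef]
    exact ((continuousAt_const.mul hg_an.continuousAt).add
      (continuousAt_const.mul (((cre cW).mul (cim cA')).sub ((cim cW).mul (cre cA'))))).add
      (continuousAt_const.mul (((cre cA).mul (cim cW')).sub ((cim cA).mul (cre cW'))))
  have cR : ContinuousAt R t₁ := by
    rw [hRdef]; exact ((cre cA).mul (cim cA')).sub ((cim cA).mul (cre cA'))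
  -- values at t₁
  have hpf1 : pf t₁ = X*Y' - Y*X' := by
    simp only [hpf]; rfl
  have hq1 : q t₁ = 0 := by
    have hcore := core_alg (a:ℝ) (b:ℝ) x y x' y' X Y X' Y' ha' hab' hxY hκ hnA hnW he5
    simp only [hqdef, hgval]
    simp only [← hx, ← hy, ← hx', ← hy', ← hX, ← hY, ← hX', ← hY']
    linarith
  have hR1 : R t₁ = x*y' - y*x' := by
    simp only [hRdef]; rfl
  have hsign : 0 < (X*Y' - Y*X') * (x*y' - y*x') :=
    core_sign (a:ℝ) (b:ℝ) x y x' y' X Y X' Y' ha' hab' hIWW hnA hnW he5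
  -- the sign σ
  set σ : ℝ := if 0 < X*Y' - Y*X' then 1 else -1 with hσdef
  have hσboth : 0 < σ * (X*Y' - Y*X') ∧ 0 < σ * (x*y' - y*x') := by
    rcases mul_pos_iff.mp hsign with ⟨h1, h2⟩ | ⟨h1, h2⟩
    · rw [hσdef, if_pos h1, one_mul, one_mul]
      exact ⟨h1, h2⟩
    · rw [hσdef, if_neg (not_lt.mpr (le_of_lt h1)), neg_one_mul, neg_one_mul]
      constructor <;> linarith
  obtain ⟨hσpf, hσR⟩ := hσboth
  have hσabs : |σ| = 1 := by
    rw [hσdef]; split_ifs <;> simp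
  -- constants
  set c₁ : ℝ := (a:ℝ) * (σ * pf t₁) / 2 with hc₁def
  set c₂ : ℝ := (b:ℝ) * (σ * R t₁) / 2 with hc₂def
  have hσpf1 : 0 < σ * pf t₁ := by rw [hpf1]; exact hσpf
  have hσR1 : 0 < σ * R t₁ := by rw [hR1]; exact hσR
  have hc₁ : 0 < c₁ := by
    rw [hc₁def]; exact div_pos (mul_pos ha' hσpf1) two_pos
  have hc₂ : 0 < c₂ := by
    rw [hc₂def]; exact div_pos (mul_pos (by linarith : (0:ℝ) < (b:ℝ)) hσR1) two_pos
  have hδ : 0 < min c₁ c₂ := lt_min hc₁ hc₂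
  -- eventual bounds
  have ev1 : ∀ᶠ t in nhds t₁, (σ * pf t₁)/2 < σ * pf t :=
    (continuousAt_const.mul cpf).eventually (eventually_gt_nhds (by show (σ * pf t₁)/2 < σ * pf t₁; linarith))
  have ev3 : ∀ᶠ t in nhds t₁, (σ * R t₁)/2 < σ * R t :=
    (continuousAt_const.mul cR).eventually (eventually_gt_nhds (by show (σ * R t₁)/2 < σ * R t₁; linarith))
  have ev2 : ∀ᶠ t in nhds t₁, |q t| < min c₁ c₂ := by
    have h2 : ContinuousAt (fun t => |q t|) t₁ := cq.abs
    have h3 : Filter.Tendsto (fun t => |q t|) (nhds t₁) (nhds 0) := by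
      have h0 : |q t₁| = 0 := by rw [hq1]; simp
      rw [ContinuousAt, h0] at h2
      exact h2
    exact h3.eventually (eventually_lt_nhds hδ)
  -- structural identity
  have hHev : ∀ᶠ t in nhds t₁, ∀ s : ℝ, Hfun a b w A s t
      = (a:ℝ)*((t-t₁)^4 * pf t) + s*((t-t₁)^2 * q t) + s^2*((b:ℝ) * R t) := by
    filter_upwards [hdw_ev] with t hdt s
    have hw' : w t = (((t-t₁)^2 : ℝ) : ℂ) * W t := by rw [hfact t]; push_cast; ring
    have hdt' : deriv w t = ((2*(t-t₁) : ℝ) : ℂ) * W t + (((t-t₁)^2 : ℝ) : ℂ) * deriv W t := by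
      rw [hdt]; push_cast; ring
    have hmg' : (A t).re*(W t).im - (A t).im*(W t).re = (t - t₁) * g t := by
      have h := hmg t
      rw [hm] at h
      exact h
    simp only [Hfun, hw', hdt', Complex.add_re, Complex.add_im, Complex.mul_re, Complex.mul_im,
      Complex.ofReal_re, Complex.ofReal_im, hpf, hqdef, hRdef]
    linear_combination (s * (2*(b:ℝ)) * (t - t₁)) * hmg'
  -- combine
  have evAll := ev1.and (ev2.and (ev3.and hHev))
  rw [Metric.eventually_nhds_iff] at evAll
  obtain ⟨ε, hε, hball⟩ := evAll
  refine ⟨ε, hε, 1, one_pos, fun t ht s hs _ => ?_⟩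
  obtain ⟨h1t, h2t, h3t, h4t⟩ := hball (show dist t t₁ < ε by rwa [Real.dist_eq])
  intro hzero0
  have habsq : |σ * q t| < min c₁ c₂ := by
    rw [abs_mul, hσabs, one_mul]; exact h2t
  have hquad : 0 < c₁ * (t-t₁)^4 + s * (t-t₁)^2 * (σ * q t) + c₂ * s^2 :=
    quad_pos c₁ c₂ (σ * q t) (t-t₁) s hc₁ hc₂ hs habsq
  have hb1 : c₁ * (t-t₁)^4 ≤ ((a:ℝ) * (σ * pf t)) * (t-t₁)^4 := by
    apply mul_le_mul_of_nonneg_right _ (by positivity)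
    have : c₁ < (a:ℝ) * (σ * pf t) := by
      rw [hc₁def]
      calc (a:ℝ) * (σ * pf t₁) / 2 = (a:ℝ) * ((σ * pf t₁)/2) := by ring
      _ < (a:ℝ) * (σ * pf t) := by
          exact mul_lt_mul_of_pos_left h1t ha'
    linarith
  have hb3 : c₂ * s^2 ≤ ((b:ℝ) * (σ * R t)) * s^2 := by
    apply mul_le_mul_of_nonneg_right _ (sq_nonneg s)
    have hb' : (0:ℝ) < (b:ℝ) := by linarith
    have : c₂ < (b:ℝ) * (σ * R t) := by
      rw [hc₂def]
      calc (b:ℝ) * (σ * R t₁) / 2 = (b:ℝ) * ((σ * R t₁)/2) := by ring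
      _ < (b:ℝ) * (σ * R t) := mul_lt_mul_of_pos_left h3t hb'
    linarith
  have hσH : 0 < σ * Hfun a b w A s t := by
    rw [h4t s]
    have hexp : σ * ((a:ℝ)*((t-t₁)^4 * pf t) + s*((t-t₁)^2 * q t) + s^2*((b:ℝ) * R t))
        = ((a:ℝ) * (σ * pf t)) * (t-t₁)^4 + s * (t-t₁)^2 * (σ * q t)
          + ((b:ℝ) * (σ * R t)) * s^2 := by ring
    rw [hexp]
    linarith
  rw [hzero0, mul_zero] at hσH
  exact lt_irrefl 0 hσH


lemma periodic_deriv' (f : ℝ → ℂ) (c : ℝ) (h : Function.Periodic f c) :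
    Function.Periodic (deriv f) c := by
  intro t
  have h1 : (fun x => f (x + c)) = f := funext h
  calc deriv f (t + c) = deriv (fun x => f (x + c)) t := (deriv_comp_add_const f c t).symm
  _ = deriv f t := by rw [h1]




/-- Nonvanishing of the Jacobian determinant of `(r, t) ↦ r^a w(t) + r^b A(t)` for small
`r > 0`, under the hypotheses of the paper: `w, A` are real-analytic and `2π`-periodic, `w` is
not identically zero, every zero of `w` is of order exactly `2`, away from its zeros `w` has
nonvanishing argument-derivative, and at every zero `t₀` of `w` the interpolation conditions
relating `A`, `A'` and the limiting argument-derivative `Im(w'''(t₀)/(3 w''(t₀)))` hold. -/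
theorem deformation_jacobian_nonvanishing
    (a b : ℕ) (ha : 0 < a) (hab : a < b)
    (w A : ℝ → ℂ)
    (hw_an : ∀ t : ℝ, AnalyticAt ℝ w t) (hA_an : ∀ t : ℝ, AnalyticAt ℝ A t)
    (hw_per : ∀ t : ℝ, w (t + 2 * Real.pi) = w t)
    (hA_per : ∀ t : ℝ, A (t + 2 * Real.pi) = A t)
    (hw0 : w ≠ 0)
    (horder : ∀ t₀ : ℝ, w t₀ = 0 → deriv w t₀ = 0 ∧ iteratedDeriv 2 w t₀ ≠ 0)
    (harg : ∀ t : ℝ, w t ≠ 0 →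
      (w t).re * (deriv w t).im - (w t).im * (deriv w t).re ≠ 0)
    (hzero : ∀ t₀ : ℝ, w t₀ = 0 →
      (iteratedDeriv 3 w t₀ / (3 * iteratedDeriv 2 w t₀)).im ≠ 0 ∧
      (A t₀ * (starRingEnd ℂ) (iteratedDeriv 2 w t₀)).im = 0 ∧
      A t₀ * (starRingEnd ℂ) (iteratedDeriv 2 w t₀) ≠ 0 ∧
      ((starRingEnd ℂ) (A t₀) * deriv A t₀).re = 0 ∧
      (deriv A t₀ / A t₀).im - (iteratedDeriv 3 w t₀ / (3 * iteratedDeriv 2 w t₀)).im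
        = (((a : ℝ) + (b : ℝ)) / (2 * (b : ℝ) - (a : ℝ))) *
            (iteratedDeriv 3 w t₀ / (3 * iteratedDeriv 2 w t₀)).im) :
    ∃ r₀ > (0 : ℝ), ∀ r : ℝ, 0 < r → r < r₀ → ∀ t : ℝ,
      ((a : ℂ) * (r : ℂ) ^ (a - 1) * w t + (b : ℂ) * (r : ℂ) ^ (b - 1) * A t).re *
          ((r : ℂ) ^ a * deriv w t + (r : ℂ) ^ b * deriv A t).im -
        ((a : ℂ) * (r : ℂ) ^ (a - 1) * w t + (b : ℂ) * (r : ℂ) ^ (b - 1) * A t).im *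
          ((r : ℂ) ^ a * deriv w t + (r : ℂ) ^ b * deriv A t).re ≠ 0 := by
  have hloc : ∀ t₁ : ℝ, ∃ ε > (0:ℝ), ∃ s₁ > (0:ℝ), ∀ t, |t - t₁| < ε →
      ∀ s, 0 < s → s < s₁ → Hfun a b w A s t ≠ 0 := by
    intro t₁
    by_cases hwt : w t₁ = 0
    · obtain ⟨hz1, hz2, hz3, _, hz5⟩ := hzero t₁ hwt
      exact local_zero a b ha hab w A hw_an hA_an t₁ hwt (horder t₁ hwt) hz1 hz2 hz3 hz5
    · exact local_nonzero a b ha w A hw_an hA_an t₁ hwt (harg t₁ hwt)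
  choose ε hε s₁ hs₁ hprop using hloc
  obtain ⟨F, hFmem, hFcov⟩ := isCompact_Icc.elim_nhds_subcover
    (fun t₁ => Metric.ball t₁ (ε t₁))
    (fun t₁ _ => Metric.ball_mem_nhds t₁ (hε t₁)) (s := Set.Icc (0:ℝ) (2*Real.pi))
  have hπ : (0:ℝ) < 2 * Real.pi := by positivity
  have h0mem : (0:ℝ) ∈ Set.Icc (0:ℝ) (2*Real.pi) := ⟨le_refl 0, le_of_lt hπ⟩
  have hFne : F.Nonempty := by
    rcases Set.mem_iUnion₂.mp (hFcov h0mem) with ⟨x, hxF, _⟩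
    exact ⟨x, hxF⟩
  set s₀ := F.inf' hFne s₁ with hs₀def
  have hs₀pos : 0 < s₀ := (Finset.lt_inf'_iff hFne).mpr (fun i hi => hs₁ i)
  refine ⟨min 1 s₀, lt_min one_pos hs₀pos, fun r hr hrlt t => ?_⟩
  rw [jacobian_eq a b ha hab w A r t]
  apply mul_ne_zero
  · have : (0:ℝ) < r ^ (a-1) * r ^ (a-1) * r := by positivity
    exact ne_of_gt this
  · set s := r ^ (b - a) with hsdef
    have hs : 0 < s := pow_pos hr _
    have hr1 : r ≤ 1 := le_of_lt (lt_of_lt_of_le hrlt (min_le_left _ _))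
    have hslt : s < s₀ := by
      have h1 : s ≤ r ^ 1 := pow_le_pow_of_le_one (le_of_lt hr) hr1 (by omega)
      have h2 : r < s₀ := lt_of_lt_of_le hrlt (min_le_right _ _)
      calc s ≤ r ^ 1 := h1
      _ = r := pow_one r
      _ < s₀ := h2
    -- periodicity of Hfun in t
    have hwd : Function.Periodic (deriv w) (2*Real.pi) := periodic_deriv' w _ hw_per
    have hAd : Function.Periodic (deriv A) (2*Real.pi) := periodic_deriv' A _ hA_per
    have hHper : Function.Periodic (fun u => Hfun a b w A s u) (2*Real.pi) := by
      intro u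
      simp only [Hfun]
      rw [hw_per u, hA_per u, hwd u, hAd u]
    set n := ⌊t / (2*Real.pi)⌋ with hn
    have hred : Hfun a b w A s (t - n * (2*Real.pi)) = Hfun a b w A s t :=
      hHper.sub_int_mul_eq n
    set t' := t - n * (2*Real.pi) with ht'def
    have ht'eq : t' = 2*Real.pi * Int.fract (t / (2*Real.pi)) := by
      rw [ht'def, Int.fract, hn]
      field_simp
    have ht'mem : t' ∈ Set.Icc (0:ℝ) (2*Real.pi) := by
      constructor
      · rw [ht'eq]
        exact mul_nonneg (le_of_lt hπ) (Int.fract_nonneg _)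
      · rw [ht'eq]
        have := Int.fract_lt_one (t / (2*Real.pi))
        nlinarith [Int.fract_nonneg (t / (2*Real.pi))]
    rcases Set.mem_iUnion₂.mp (hFcov ht'mem) with ⟨z, hzF, hzball⟩
    have hdist : |t' - z| < ε z := by
      rw [Metric.mem_ball, Real.dist_eq] at hzball
      exact hzball
    have hsz : s < s₁ z := lt_of_lt_of_le hslt (Finset.inf'_le s₁ hzF)
    have := hprop z t' hdist s hs hsz
    rw [← hred]
    exact this
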